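/- Let ρ > 0. For every absolutely continuous input u : [0,T] → ℝ and every initial value w₀ with |w₀ - u(0)| ≤ ρ, there exists a unique absolutely continuous function w : [0,T] → ℝ satisfying w(0) = w₀, |u(t) - w(t)| ≤ ρ for all t ∈ [0,T], and w'(t)·(u(t) - w(t) - v) ≥ 0 for almost every t and every v with |v| ≤ ρ. -/

import Mathlib

open MeasureTheory Set Filter

/-- `f` is absolutely continuous on `[0,T]`: it is the integral of an integrable function. -/
def AbsContOn (T : ℝ) (f : ℝ → ℝ) : Prop :=
  ∃ f' : ℝ → ℝ, MeasureTheory.IntegrableOn f' (Set.Icc 0 T) ∧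
    ∀ t ∈ Set.Icc (0:ℝ) T, f t = f 0 + ∫ s in Set.Ioc (0:ℝ) t, f' s

/-- `w` is the output of the scalar play operator with parameter `ρ` on `[0,T]`,
applied to the input `u` with initial state `w₀`, characterized by the
variational inequality: `w` is absolutely continuous, `w 0 = w₀`,
`|u - w| ≤ ρ` on `[0,T]`, and `w' (u - w - v) ≥ 0` a.e. for all `|v| ≤ ρ`. -/
def IsPlayOutput (ρ T : ℝ) (u : ℝ → ℝ) (w₀ : ℝ) (w : ℝ → ℝ) : Prop :=
  w 0 = w₀ ∧
  ∃ w' : ℝ → ℝ, MeasureTheory.IntegrableOn w' (Set.Icc 0 T) ∧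
    (∀ t ∈ Set.Icc (0:ℝ) T, w t = w₀ + ∫ s in Set.Ioc (0:ℝ) t, w' s) ∧
    (∀ t ∈ Set.Icc (0:ℝ) T, |u t - w t| ≤ ρ) ∧
    (∀ᵐ t ∂(MeasureTheory.volume.restrict (Set.Icc (0:ℝ) T)),
      ∀ v : ℝ, |v| ≤ ρ → 0 ≤ w' t * (u t - w t - v))

open Topology


lemma primitive_diff {K : ℝ → ℝ} (hK : Integrable K) {s t : ℝ} (hst : s ≤ t) :
    (∫ x in Iic t, K x) - ∫ x in Iic s, K x = ∫ x in Ioc s t, K x := by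
  have h : Iic s ∪ Ioc s t = Iic t := Iic_union_Ioc_eq_Iic hst
  have h2 := setIntegral_union (f := K) (μ := volume) (s := Iic s) (t := Ioc s t)
      (Iic_disjoint_Ioc (le_refl s)) measurableSet_Ioc hK.integrableOn hK.integrableOn
  rw [h] at h2
  linarith [h2]

lemma cont_primitive {K : ℝ → ℝ} (hK : Integrable K) :
    Continuous fun t => ∫ x in Iic t, K x := by
  rw [continuous_iff_continuousAt]
  intro x
  have hrw : ∀ t : ℝ, ∫ y in Iic t, K y = ∫ y, (Iic t).indicator K y := by
    intro t; rw [integral_indicator measurableSet_Iic]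
  simp only [ContinuousAt, hrw]
  apply tendsto_integral_filter_of_dominated_convergence (fun y => |K y|)
  · exact Eventually.of_forall fun t =>
      (hK.aestronglyMeasurable.indicator measurableSet_Iic)
  · refine Eventually.of_forall fun t => Eventually.of_forall fun y => ?_
    by_cases h : y ∈ Iic t <;> simp [indicator_of_mem, indicator_of_notMem, h, le_abs_self, abs_nonneg]
  · exact hK.abs
  · filter_upwards [compl_mem_ae_iff.2 (Real.volume_singleton (a := x))] with y hy
    rcases lt_or_gt_of_ne (hy : y ≠ x) with h | h
    · refine Tendsto.congr' ?_ tendsto_const_nhds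
      filter_upwards [eventually_gt_nhds h] with t ht
      rw [indicator_of_mem (mem_Iic.2 h.le), indicator_of_mem (mem_Iic.2 ht.le)]
    · refine Tendsto.congr' ?_ tendsto_const_nhds
      filter_upwards [eventually_lt_nhds h] with t ht
      rw [indicator_of_notMem (by simpa using h : y ∉ Iic x),
        indicator_of_notMem (by simpa using ht : y ∉ Iic t)]

lemma contOn_of_modulus {f F : ℝ → ℝ} {a b : ℝ} (hF : Continuous F)
    (h : ∀ s t, a ≤ s → s ≤ t → t ≤ b → |f t - f s| ≤ F t - F s) :
    ContinuousOn f (Icc a b) := by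
  intro x hx
  have key : ∀ y ∈ Icc a b, |f y - f x| ≤ |F y - F x| := by
    intro y hy
    rcases le_total y x with hyx | hxy
    · rw [abs_sub_comm]
      refine (h y x hy.1 hyx hx.2).trans ?_
      rw [abs_sub_comm]; exact le_abs_self _
    · exact (h x y hx.1 hxy hy.2).trans (le_abs_self _)
  have hFx : Tendsto (fun y => |F y - F x|) (nhdsWithin x (Icc a b)) (nhds 0) := by
    have : Tendsto (fun y => |F y - F x|) (nhds x) (nhds |F x - F x|) :=
      ((hF.tendsto x).sub tendsto_const_nhds).abs
    simpa using this.mono_left nhdsWithin_le_nhds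
  have : Tendsto (fun y => f y - f x) (nhdsWithin x (Icc a b)) (nhds 0) := by
    apply squeeze_zero_norm' _ hFx
    filter_upwards [self_mem_nhdsWithin] with y hy using key y hy
  have := this.add (tendsto_const_nhds (x := f x))
  show Tendsto f (nhdsWithin x (Icc a b)) (nhds (f x))
  simpa using this

lemma deriv_nonneg_of_monotoneOn {f : ℝ → ℝ} {d x ε : ℝ} (hε : 0 < ε)
    (hd : HasDerivAt f d x) (hm : MonotoneOn f (Ioo (x - ε) (x + ε))) : 0 ≤ d := by
  rw [hasDerivAt_iff_tendsto_slope] at hd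
  have hd' : Tendsto (slope f x) (nhdsWithin x (Ioi x)) (nhds d) :=
    hd.mono_left (nhdsWithin_mono x fun y hy => ne_of_gt hy)
  refine ge_of_tendsto hd' ?_
  filter_upwards [Ioo_mem_nhdsGT_of_mem (⟨le_refl x, by linarith⟩ : x ∈ Ico x (x + ε))] with y hy
  rw [slope_def_field]
  apply div_nonneg _ (by linarith [hy.1] : (0:ℝ) ≤ y - x)
  have hxmem : x ∈ Ioo (x - ε) (x + ε) := by constructor <;> linarith
  have hymem : y ∈ Ioo (x - ε) (x + ε) := by constructor <;> [linarith [hy.1]; exact hy.2]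
  linarith [hm hxmem hymem hy.1.le]

lemma deriv_nonpos_of_antitoneOn {f : ℝ → ℝ} {d x ε : ℝ} (hε : 0 < ε)
    (hd : HasDerivAt f d x) (hm : AntitoneOn f (Ioo (x - ε) (x + ε))) : d ≤ 0 := by
  have : (0:ℝ) ≤ -d := deriv_nonneg_of_monotoneOn hε hd.neg fun p hp q hq hpq =>
    neg_le_neg (hm hp hq hpq)
  linarith

/-- Variational-inequality style solution predicate on `[a,b]`. -/
def PlaySol (ρ : ℝ) (F u : ℝ → ℝ) (a b : ℝ) (wa : ℝ) (w : ℝ → ℝ) : Prop :=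
  w a = wa ∧
  (∀ s t, a ≤ s → s ≤ t → t ≤ b → |w t - w s| ≤ F t - F s) ∧
  (∀ t, a ≤ t → t ≤ b → |u t - w t| ≤ ρ) ∧
  (∀ s t, a ≤ s → s ≤ t → t ≤ b → (∀ r, s ≤ r → r ≤ t → u r - w r < ρ) → w t ≤ w s) ∧
  (∀ s t, a ≤ s → s ≤ t → t ≤ b → (∀ r, s ≤ r → r ≤ t → -ρ < u r - w r) → w s ≤ w t)

lemma PlaySol.neg {ρ : ℝ} {F u : ℝ → ℝ} {a b wa : ℝ} {w : ℝ → ℝ}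
    (h : PlaySol ρ F u a b wa w) :
    PlaySol ρ F (fun t => -u t) a b (-wa) (fun t => -w t) := by
  obtain ⟨h0, hb, hc, hd1, hd2⟩ := h
  refine ⟨by simp only [h0], fun s t hs hst htb => ?_, fun t ht htb => ?_,
    fun s t hs hst htb hr => ?_, fun s t hs hst htb hr => ?_⟩
  · simp only [show -w t - -w s = -(w t - w s) by ring, abs_neg]; exact hb s t hs hst htb
  · simp only [show -u t - -w t = -(u t - w t) by ring, abs_neg]; exact hc t ht htb
  · simp only [neg_le_neg_iff]
    refine hd2 s t hs hst htb fun r hsr hrt => ?_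
    have h := hr r hsr hrt; simp only at h; linarith
  · simp only [neg_le_neg_iff]
    refine hd1 s t hs hst htb fun r hsr hrt => ?_
    have h := hr r hsr hrt; simp only at h; linarith

lemma upper_era {ρ : ℝ} (hρ : 0 < ρ) {F u : ℝ → ℝ} (hF : Continuous F)
    {a b : ℝ} (hab : a ≤ b)
    (hmod : ∀ s t, a ≤ s → s ≤ t → t ≤ b → |u t - u s| ≤ F t - F s)
    (wa : ℝ) (hwa1 : u a - wa ≤ ρ) (hwa2 : -ρ ≤ u a - wa) :
    ∃ σ w, a ≤ σ ∧ σ ≤ b ∧ PlaySol ρ F u a σ wa w ∧ (σ = b ∨ u σ - w σ = -ρ) := by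
  have hucont : ContinuousOn u (Icc a b) := contOn_of_modulus hF hmod
  have hFm : ∀ s t, a ≤ s → s ≤ t → t ≤ b → F s ≤ F t := fun s t hs hst htb => by
    have h1 := hmod s t hs hst htb
    have h2 := abs_nonneg (u t - u s); linarith
  set M : ℝ → ℝ := fun t => sSup ((fun s => u s - ρ) '' Icc a t) with hM
  set w : ℝ → ℝ := fun t => max wa (M t) with hw
  have hne : ∀ t, a ≤ t → ((fun s => u s - ρ) '' Icc a t).Nonempty :=
    fun t ht => (nonempty_Icc.2 ht).image _
  have hbdd : ∀ t, a ≤ t → t ≤ b → BddAbove ((fun s => u s - ρ) '' Icc a t) := by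
    intro t ht htb
    refine ⟨u a - ρ + (F t - F a), ?_⟩
    rintro y ⟨r, hr, rfl⟩
    show u r - ρ ≤ _
    have h1 := le_of_abs_le (hmod a r (le_refl a) hr.1 (hr.2.trans htb))
    have h2 := hFm r t hr.1 hr.2 htb
    linarith
  have hMle : ∀ t r, a ≤ r → r ≤ t → t ≤ b → u r - ρ ≤ M t := fun t r har hrt htb =>
    le_csSup (hbdd t (har.trans hrt) htb) ⟨r, ⟨har, hrt⟩, rfl⟩
  have hMleb : ∀ t c, a ≤ t → (∀ r, a ≤ r → r ≤ t → u r - ρ ≤ c) → M t ≤ c := by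
    intro t c ht hc
    refine csSup_le (hne t ht) ?_
    rintro y ⟨r, hr, rfl⟩; exact hc r hr.1 hr.2
  have hwa' : w a = wa := by
    rw [hw]; simp only [max_eq_left_iff]
    exact hMleb a wa (le_refl a) fun r har hra => by
      have : r = a := le_antisymm hra har
      rw [this]; linarith
  have hwmono : ∀ s t, a ≤ s → s ≤ t → t ≤ b → w s ≤ w t := by
    intro s t hs hst htb
    exact max_le_max (le_refl wa)
      (hMleb s (M t) hs fun r har hrs => hMle t r har (hrs.trans hst) htb)
  have hwups : ∀ t, a ≤ t → t ≤ b → u t - ρ ≤ w t := fun t ht htb =>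
    (hMle t t ht (le_refl t) htb).trans (le_max_right _ _)
  have hmodw : ∀ s t, a ≤ s → s ≤ t → t ≤ b → |w t - w s| ≤ F t - F s := by
    intro s t hs hst htb
    rw [abs_of_nonneg (by linarith [hwmono s t hs hst htb])]
    have : w t ≤ w s + (F t - F s) := by
      apply max_le (by linarith [le_max_left wa (M s), hFm s t hs hst htb])
      apply hMleb t _ (hs.trans hst)
      intro r har hrt
      rcases le_total r s with hrs | hsr
      · have := hMle s r har hrs (hst.trans htb)
        have h2 := hFm s t hs hst htb
        have h3 := le_max_right wa (M s)
        simp only [← hw] at *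
        linarith
      · have h1 := le_of_abs_le (hmod s r hs hsr (hrt.trans htb))
        have h2 := hFm r t (hs.trans hsr) hrt htb
        have h3 := hwups s hs (hst.trans htb)
        linarith
    linarith
  have hwcont : ContinuousOn w (Icc a b) := contOn_of_modulus hF hmodw
  set S : Set ℝ := Icc a b ∩ (fun t => w t - u t) ⁻¹' Ici ρ with hS
  have hSclosed : IsClosed S :=
    (hwcont.sub hucont).preimage_isClosed_of_isClosed isClosed_Icc isClosed_Ici
  have hSbdd : BddBelow (S ∪ {b}) := by
    refine ⟨a, ?_⟩
    rintro x (hx | hx)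
    · exact hx.1.1
    · rw [mem_singleton_iff] at hx; rw [hx]; exact hab
  set σ := sInf (S ∪ {b}) with hσ
  have hbinS : b ∈ S ∪ {b} := Or.inr rfl
  have hσa : a ≤ σ := by
    apply le_csInf ⟨b, hbinS⟩
    rintro x (hx | hx)
    · exact hx.1.1
    · rw [mem_singleton_iff] at hx; rw [hx]; exact hab
  have hσb : σ ≤ b := csInf_le hSbdd hbinS
  have hσmem : σ ∈ S ∪ {b} :=
    (hSclosed.union isClosed_singleton).csInf_mem ⟨b, hbinS⟩ hSbdd
  have hlt : ∀ t, a ≤ t → t < σ → w t - u t < ρ := by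
    intro t ht htσ
    by_contra hcon
    push_neg at hcon
    have : t ∈ S := ⟨⟨ht, htσ.le.trans hσb⟩, hcon⟩
    exact absurd (csInf_le hSbdd (Or.inl this)) (not_le.2 htσ)
  have hleσ : w σ - u σ ≤ ρ := by
    rcases eq_or_lt_of_le hσa with h | h
    · rw [← h, hwa']; linarith
    · have hne' : (nhdsWithin σ (Ico a σ)).NeBot := by
        rw [← mem_closure_iff_nhdsWithin_neBot, closure_Ico (ne_of_lt h)]
        exact ⟨hσa, le_refl σ⟩
      have htcl : Tendsto (fun y => w y - u y) (nhdsWithin σ (Ico a σ)) (nhds (w σ - u σ)) := by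
        have h2 := (hwcont.sub hucont) σ ⟨hσa, hσb⟩
        exact h2.mono_left (nhdsWithin_mono σ (fun y hy => ⟨hy.1, hy.2.le.trans hσb⟩))
      apply le_of_tendsto htcl
      filter_upwards [self_mem_nhdsWithin] with y hy
      exact (hlt y hy.1 hy.2).le
  have hle : ∀ t, a ≤ t → t ≤ σ → w t - u t ≤ ρ := by
    intro t ht htσ
    rcases lt_or_eq_of_le htσ with hcase | hcase
    · exact (hlt t ht hcase).le
    · rw [hcase]; exact hleσ
  refine ⟨σ, w, hσa, hσb, ⟨hwa', fun s t hs hst htb => hmodw s t hs hst (htb.trans hσb),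
    fun t ht htσ => ?_, fun s t hs hst htσ hcon => ?_,
    fun s t hs hst htσ _ => hwmono s t hs hst (htσ.trans hσb)⟩, ?_⟩
  · rw [abs_le]
    constructor
    · linarith [hle t ht htσ]
    · linarith [hwups t ht (htσ.trans hσb)]
  · -- d1 clause
    by_contra hcon2
    push_neg at hcon2
    have htb : t ≤ b := htσ.trans hσb
    have hwt : w t = M t := by
      rcases max_cases wa (M t) with ⟨h1, _⟩ | ⟨h1, _⟩
      · exfalso
        have : w s ≥ wa := le_max_left _ _
        rw [hw] at hcon2; simp only at hcon2
        rw [hw] at this; simp only at this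
        linarith [h1]
      · exact h1
    -- M t = sup over [s,t]
    have hKbdd : BddAbove ((fun s => u s - ρ) '' Icc s t) :=
      (hbdd t (hs.trans hst) htb).mono (image_mono (Icc_subset_Icc hs (le_refl t)))
    set K := sSup ((fun s => u s - ρ) '' Icc s t) with hK
    have hMtK : M t ≤ max (M s) K := by
      apply hMleb t _ (hs.trans hst)
      intro r har hrt
      rcases le_total r s with hrs | hsr
      · exact (hMle s r har hrs (hst.trans htb)).trans (le_max_left _ _)
      · exact (le_csSup hKbdd ⟨r, ⟨hsr, hrt⟩, rfl⟩).trans (le_max_right _ _)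
    have hMtK2 : w t ≤ K := by
      rcases max_cases (M s) K with ⟨h1, _⟩ | ⟨h1, _⟩
      · exfalso
        have hws : M s ≤ w s := le_max_right _ _
        rw [hwt] at hcon2
        rw [h1] at hMtK
        linarith
      · rw [hwt]; rw [h1] at hMtK; exact hMtK
    -- attainment
    obtain ⟨r₀, hr₀mem, hr₀max⟩ := isCompact_Icc.exists_isMaxOn (nonempty_Icc.2 hst)
      (((hucont.mono (Icc_subset_Icc (hs) (htb))).sub continuousOn_const) :
        ContinuousOn (fun s => u s - ρ) (Icc s t))
    have hKle : K ≤ u r₀ - ρ := by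
      apply csSup_le ((nonempty_Icc.2 hst).image _)
      rintro y ⟨r, hr, rfl⟩
      exact hr₀max hr
    have h1 : w r₀ ≤ w t := hwmono r₀ t (hs.trans hr₀mem.1) hr₀mem.2 htb
    have h2 : u r₀ - ρ ≤ w r₀ := hwups r₀ (hs.trans hr₀mem.1) (hr₀mem.2.trans htb)
    have := hcon r₀ hr₀mem.1 hr₀mem.2
    linarith
  · rcases hσmem with hσS | hσb'
    · right
      have h1 : ρ ≤ w σ - u σ := hσS.2
      have h2 := hle σ hσa (le_refl σ)
      linarith
    · left; exact hσb'

lemma budget {ρ : ℝ} (hρ : 0 < ρ) {F u : ℝ → ℝ} (hF : Continuous F) {a σ wa : ℝ} {w : ℝ → ℝ}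
    (haσ : a ≤ σ)
    (hmod : ∀ s t, a ≤ s → s ≤ t → t ≤ σ → |u t - u s| ≤ F t - F s)
    (hs : PlaySol ρ F u a σ wa w) (hua : u a - w a = ρ) (huσ : u σ - w σ = -ρ) :
    2 * ρ ≤ F σ - F a := by
  obtain ⟨h0, hb, hc, hd1, hd2⟩ := hs
  have hucont : ContinuousOn u (Icc a σ) := contOn_of_modulus hF hmod
  have hwcont : ContinuousOn w (Icc a σ) := contOn_of_modulus hF hb
  have hFm : ∀ s t, a ≤ s → s ≤ t → t ≤ σ → F s ≤ F t := fun s t h1 h2 h3 => by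
    have := hmod s t h1 h2 h3
    have := abs_nonneg (u t - u s); linarith
  set S : Set ℝ := Icc a σ ∩ (fun t => u t - w t) ⁻¹' {ρ} with hS
  have hSclosed : IsClosed S :=
    (hucont.sub hwcont).preimage_isClosed_of_isClosed isClosed_Icc isClosed_singleton
  have haS : a ∈ S := ⟨⟨le_refl a, haσ⟩, hua⟩
  have hSbddA : BddAbove S := ⟨σ, fun x hx => hx.1.2⟩
  set r := sSup S with hr
  have hrS : r ∈ S := hSclosed.csSup_mem ⟨a, haS⟩ hSbddA
  have hra : a ≤ r := hrS.1.1
  have hrσ : r ≤ σ := hrS.1.2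
  have hrne : r ≠ σ := by
    intro h
    rw [h] at hrS
    have := hrS.2
    simp only [mem_preimage, mem_singleton_iff] at this
    linarith
  have hrlt : r < σ := lt_of_le_of_ne hrσ hrne
  have hclaim : ∀ r', r < r' → r' ≤ σ → w σ ≤ w r' := by
    intro r' hrr' hr'σ
    apply hd1 r' σ (hra.trans hrr'.le) hr'σ (le_refl σ)
    intro x hx1 hx2
    have hxc := hc x (hra.trans (hrr'.le.trans hx1)) hx2
    rcases lt_or_eq_of_le (le_of_abs_le hxc) with h | h
    · exact h
    · exfalso
      have : x ∈ S := ⟨⟨hra.trans (hrr'.le.trans hx1), hx2⟩, h⟩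
      have := le_csSup hSbddA this
      linarith
  have hwr : w σ ≤ w r := by
    have hne' : (nhdsWithin r (Ioc r σ)).NeBot := by
      rw [← mem_closure_iff_nhdsWithin_neBot, closure_Ioc (ne_of_lt hrlt)]
      exact ⟨le_refl r, hrσ⟩
    have htcl : Tendsto w (nhdsWithin r (Ioc r σ)) (nhds (w r)) :=
      (hwcont r ⟨hra, hrσ⟩).mono_left (nhdsWithin_mono r (fun y hy => ⟨hra.trans hy.1.le, hy.2⟩))
    apply ge_of_tendsto htcl
    filter_upwards [self_mem_nhdsWithin] with y hy
    exact hclaim y hy.1 hy.2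
  have hur : u r - w r = ρ := hrS.2
  have h1 : 2 * ρ ≤ u r - u σ := by linarith
  have h2 := hmod r σ hra hrσ (le_refl σ)
  rw [abs_sub_comm] at h2
  have h3 := le_of_abs_le h2
  have h4 := hFm a r (le_refl a) hra hrσ
  linarith

lemma PlaySol.glue {ρ : ℝ} {F u : ℝ → ℝ} {a σ b wa : ℝ} {w₁ w₂ : ℝ → ℝ}
    (haσ : a ≤ σ) (hσb : σ ≤ b)
    (h1 : PlaySol ρ F u a σ wa w₁) (h2 : PlaySol ρ F u σ b (w₁ σ) w₂) :
    PlaySol ρ F u a b wa (fun t => if t ≤ σ then w₁ t else w₂ t) := by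
  obtain ⟨h10, h1b, h1c, h1d1, h1d2⟩ := h1
  obtain ⟨h20, h2b, h2c, h2d1, h2d2⟩ := h2
  have hFm1 : ∀ s t, a ≤ s → s ≤ t → t ≤ σ → F s ≤ F t := fun s t ha hb' hc' => by
    have := h1b s t ha hb' hc'; have := abs_nonneg (w₁ t - w₁ s); linarith
  have hFm2 : ∀ s t, σ ≤ s → s ≤ t → t ≤ b → F s ≤ F t := fun s t ha hb' hc' => by
    have := h2b s t ha hb' hc'; have := abs_nonneg (w₂ t - w₂ s); linarith
  have hval : ∀ t, (if t ≤ σ then w₁ t else w₂ t) = if t ≤ σ then w₁ t else w₂ t := fun _ => rfl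
  refine ⟨by simp only [if_pos haσ, h10], ?_, ?_, ?_, ?_⟩
  · intro s t hs hst htb
    by_cases hts : t ≤ σ
    · simp only [if_pos hts, if_pos (hst.trans hts)]
      exact h1b s t hs hst hts
    · push_neg at hts
      simp only [if_neg (not_le.2 hts)]
      by_cases hsσ : s ≤ σ
      · simp only [if_pos hsσ]
        calc |w₂ t - w₁ s| ≤ |w₂ t - w₂ σ| + |w₂ σ - w₁ s| := abs_sub_le _ _ _
          _ = |w₂ t - w₂ σ| + |w₁ σ - w₁ s| := by rw [h20]
          _ ≤ (F t - F σ) + (F σ - F s) :=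
            add_le_add (h2b σ t (le_refl σ) hts.le htb) (h1b s σ hs hsσ (le_refl σ))
          _ = F t - F s := by ring
      · push_neg at hsσ
        simp only [if_neg (not_le.2 hsσ)]
        exact h2b s t hsσ.le hst htb
  · intro t ht htb
    by_cases hts : t ≤ σ
    · simp only [if_pos hts]; exact h1c t ht hts
    · push_neg at hts
      simp only [if_neg (not_le.2 hts)]; exact h2c t hts.le htb
  · intro s t hs hst htb hcon
    by_cases hts : t ≤ σ
    · simp only [if_pos hts, if_pos (hst.trans hts)]
      refine h1d1 s t hs hst hts fun x hx1 hx2 => ?_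
      have := hcon x hx1 hx2
      simp only at this
      rwa [if_pos (hx2.trans hts)] at this
    · push_neg at hts
      simp only [if_neg (not_le.2 hts)]
      by_cases hsσ : s ≤ σ
      · simp only [if_pos hsσ]
        have hA : w₂ t ≤ w₂ σ := by
          refine h2d1 σ t (le_refl σ) hts.le htb fun x hx1 hx2 => ?_
          have := hcon x (hsσ.trans hx1) hx2
          simp only at this
          rcases le_or_gt x σ with hxσ | hxσ
          · have hxa : x = σ := le_antisymm hxσ hx1
            subst hxa
            rw [if_pos (le_refl x)] at this
            rwa [h20]
          · rwa [if_neg (not_le.2 hxσ)] at this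
        have hB : w₁ σ ≤ w₁ s := by
          refine h1d1 s σ hs hsσ (le_refl σ) fun x hx1 hx2 => ?_
          have := hcon x hx1 (hx2.trans (le_of_lt hts))
          simp only at this
          rwa [if_pos hx2] at this
        rw [h20] at hA
        linarith
      · push_neg at hsσ
        simp only [if_neg (not_le.2 hsσ)]
        refine h2d1 s t hsσ.le hst htb fun x hx1 hx2 => ?_
        have := hcon x hx1 hx2
        simp only at this
        rwa [if_neg (not_le.2 (lt_of_lt_of_le hsσ hx1))] at this
  · intro s t hs hst htb hcon
    by_cases hts : t ≤ σ
    · simp only [if_pos hts, if_pos (hst.trans hts)]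
      refine h1d2 s t hs hst hts fun x hx1 hx2 => ?_
      have := hcon x hx1 hx2
      simp only at this
      rwa [if_pos (hx2.trans hts)] at this
    · push_neg at hts
      simp only [if_neg (not_le.2 hts)]
      by_cases hsσ : s ≤ σ
      · simp only [if_pos hsσ]
        have hA : w₂ σ ≤ w₂ t := by
          refine h2d2 σ t (le_refl σ) hts.le htb fun x hx1 hx2 => ?_
          have := hcon x (hsσ.trans hx1) hx2
          simp only at this
          rcases le_or_gt x σ with hxσ | hxσ
          · have hxa : x = σ := le_antisymm hxσ hx1
            subst hxa
            rw [if_pos (le_refl x)] at this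
            rwa [h20]
          · rwa [if_neg (not_le.2 hxσ)] at this
        have hB : w₁ s ≤ w₁ σ := by
          refine h1d2 s σ hs hsσ (le_refl σ) fun x hx1 hx2 => ?_
          have := hcon x hx1 (hx2.trans (le_of_lt hts))
          simp only at this
          rwa [if_pos hx2] at this
        rw [h20] at hA
        linarith
      · push_neg at hsσ
        simp only [if_neg (not_le.2 hsσ)]
        refine h2d2 s t hsσ.le hst htb fun x hx1 hx2 => ?_
        have := hcon x hx1 hx2
        simp only at this
        rwa [if_neg (not_le.2 (lt_of_lt_of_le hsσ hx1))] at this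

lemma neg_mod {F u : ℝ → ℝ} {a b : ℝ}
    (hmod : ∀ s t, a ≤ s → s ≤ t → t ≤ b → |u t - u s| ≤ F t - F s) :
    ∀ s t, a ≤ s → s ≤ t → t ≤ b → |(-u t) - (-u s)| ≤ F t - F s := fun s t h1 h2 h3 => by
  rw [show -u t - -u s = -(u t - u s) by ring, abs_neg]; exact hmod s t h1 h2 h3

lemma PlaySol.of_neg {ρ : ℝ} {F u : ℝ → ℝ} {a b wa : ℝ} {w : ℝ → ℝ}
    (h : PlaySol ρ F (fun t => -u t) a b (-wa) w) :
    PlaySol ρ F u a b wa (fun t => -w t) := by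
  have := h.neg
  simp only [neg_neg] at this
  exact this

lemma Qrec {ρ : ℝ} (hρ : 0 < ρ) {F u : ℝ → ℝ} (hF : Continuous F) {T : ℝ}
    (hmod : ∀ s t, 0 ≤ s → s ≤ t → t ≤ T → |u t - u s| ≤ F t - F s) :
    ∀ n : ℕ, ∀ a wa, 0 ≤ a → a ≤ T → (u a - wa = ρ ∨ u a - wa = -ρ) →
      F T - F a < 2 * ρ * n → ∃ w, PlaySol ρ F u a T wa w := by
  intro n
  induction n with
  | zero =>
    intro a wa ha haT hcontact hbud
    exfalso
    have hF0 : F a ≤ F T := by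
      have h1 := hmod a T ha haT (le_refl T)
      have h2 := abs_nonneg (u T - u a)
      linarith
    push_cast at hbud
    linarith
  | succ n ih =>
    intro a wa ha haT hcontact hbud
    have hmodr : ∀ s t, a ≤ s → s ≤ t → t ≤ T → |u t - u s| ≤ F t - F s :=
      fun s t h1 h2 h3 => hmod s t (ha.trans h1) h2 h3
    rcases hcontact with hcon | hcon
    · -- upper era first
      obtain ⟨σ, w₁, hσa, hσT, hsol, hend⟩ := upper_era hρ hF haT hmodr wa
        (by linarith) (by linarith)
      rcases hend with hendT | hendC
      · subst hendT; exact ⟨w₁, hsol⟩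
      · have hbud2 : 2 * ρ ≤ F σ - F a := by
          refine budget hρ hF hσa (fun s t h1 h2 h3 => hmodr s t h1 h2 (h3.trans hσT))
            hsol ?_ hendC
          rw [hsol.1]; exact hcon
        obtain ⟨w₂, hsol2⟩ := ih σ (w₁ σ) (ha.trans hσa) hσT (Or.inr hendC)
          (by push_cast at hbud ⊢; linarith)
        exact ⟨_, hsol.glue hσa hσT hsol2⟩
    · -- lower era first (reflect)
      obtain ⟨σ, wn, hσa, hσT, hsol, hend⟩ := upper_era hρ hF haT (neg_mod hmodr) (-wa)
        (by linarith) (by linarith)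
      have hsol' : PlaySol ρ F u a σ wa (fun t => -wn t) := hsol.of_neg
      rcases hend with hendT | hendC
      · subst hendT; exact ⟨_, hsol'⟩
      · have hendC2 : -u σ - wn σ = -ρ := hendC
        have hendC' : u σ - (fun t => -wn t) σ = ρ := by
          show u σ - (-wn σ) = ρ; linarith
        have hbud2 : 2 * ρ ≤ F σ - F a := by
          refine budget hρ hF hσa (fun s t h1 h2 h3 => neg_mod hmodr s t h1 h2 (h3.trans hσT))
            hsol ?_ hendC
          rw [hsol.1]
          show -u a - (-wa) = ρ; linarith
        obtain ⟨w₂, hsol2⟩ := ih σ (-wn σ) (ha.trans hσa) hσT (Or.inl hendC')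
          (by push_cast at hbud ⊢; linarith)
        exact ⟨_, hsol'.glue hσa hσT hsol2⟩

lemma exists_playSol {ρ : ℝ} (hρ : 0 < ρ) {F u : ℝ → ℝ} (hF : Continuous F) {T : ℝ}
    (hT : 0 ≤ T)
    (hmod : ∀ s t, 0 ≤ s → s ≤ t → t ≤ T → |u t - u s| ≤ F t - F s)
    (w₀ : ℝ) (hw₀ : |u 0 - w₀| ≤ ρ) :
    ∃ w, PlaySol ρ F u 0 T w₀ w := by
  obtain ⟨n, hn⟩ := exists_nat_gt ((F T - F 0) / (2 * ρ))
  have hbud : F T - F 0 < 2 * ρ * n := by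
    rw [div_lt_iff₀ (by linarith)] at hn; linarith
  obtain ⟨σ, w₁, hσa, hσT, hsol, hend⟩ := upper_era hρ hF hT hmod w₀
    (le_of_abs_le hw₀) (neg_le_of_abs_le hw₀)
  rcases hend with hendT | hendC
  · subst hendT; exact ⟨w₁, hsol⟩
  · have hF0σ : F 0 ≤ F σ := by
      have := hmod 0 σ (le_refl 0) hσa hσT
      have := abs_nonneg (u σ - u 0); linarith
    obtain ⟨w₂, hsol2⟩ := Qrec hρ hF hmod n σ (w₁ σ) hσa hσT (Or.inr hendC)
      (by linarith)
    exact ⟨_, hsol.glue hσa hσT hsol2⟩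

lemma cont_of_modulus_global {f F : ℝ → ℝ} (hF : Continuous F)
    (h : ∀ s t, s ≤ t → |f t - f s| ≤ F t - F s) : Continuous f := by
  rw [continuous_iff_continuousAt]
  intro x
  have hon : ContinuousOn f (Icc (x - 1) (x + 1)) :=
    contOn_of_modulus hF fun s t _ hst _ => h s t hst
  exact hon.continuousAt (Icc_mem_nhds (by linarith) (by linarith))

lemma exists_playOutput (ρ T : ℝ) (hρ : 0 < ρ) (hT : 0 ≤ T)
    (u : ℝ → ℝ) (hu : AbsContOn T u) (w₀ : ℝ) (hw₀ : |w₀ - u 0| ≤ ρ) :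
    ∃ w : ℝ → ℝ, IsPlayOutput ρ T u w₀ w := by
  classical
  obtain ⟨u', hu'int, hu'rep⟩ := hu
  set G : ℝ → ℝ := (Icc (0:ℝ) T).indicator (fun s => |u' s|) with hG
  have hGint : Integrable G :=
    IntegrableOn.integrable_indicator (hu'int.abs) measurableSet_Icc
  have hGnn : ∀ x, 0 ≤ G x := fun x =>
    indicator_nonneg (fun y _ => abs_nonneg (u' y)) x
  set F : ℝ → ℝ := fun t => ∫ x in Iic t, G x with hF
  have hFcont : Continuous F := cont_primitive hGint
  have hFdiff : ∀ s t : ℝ, s ≤ t → F t - F s = ∫ x in Ioc s t, G x :=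
    fun s t hst => primitive_diff hGint hst
  -- integral of u' over Ioc s t for 0 ≤ s ≤ t ≤ T
  have hudiff : ∀ s t, 0 ≤ s → s ≤ t → t ≤ T → u t - u s = ∫ x in Ioc s t, u' x := by
    intro s t h0s hst htT
    rw [hu'rep t ⟨h0s.trans hst, htT⟩, hu'rep s ⟨h0s, hst.trans htT⟩]
    have hun : Ioc (0:ℝ) s ∪ Ioc s t = Ioc 0 t := Ioc_union_Ioc_eq_Ioc h0s hst
    have h2 := setIntegral_union (f := u') (μ := volume) (s := Ioc (0:ℝ) s) (t := Ioc s t)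
      (Ioc_disjoint_Ioc_of_le (le_refl _)) measurableSet_Ioc
      (hu'int.mono_set (Ioc_subset_Icc_self.trans (Icc_subset_Icc (le_refl 0) (hst.trans htT))))
      (hu'int.mono_set ((Ioc_subset_Icc_self.trans (Icc_subset_Icc h0s htT))))
    rw [hun] at h2
    rw [h2]; ring
  have hmod : ∀ s t, 0 ≤ s → s ≤ t → t ≤ T → |u t - u s| ≤ F t - F s := by
    intro s t h0s hst htT
    rw [hudiff s t h0s hst htT, hFdiff s t hst]
    have h1 : |∫ x in Ioc s t, u' x| ≤ ∫ x in Ioc s t, |u' x| := by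
      simpa [Real.norm_eq_abs] using
        norm_integral_le_integral_norm (f := u') (μ := volume.restrict (Ioc s t))
    have h2 : ∫ x in Ioc s t, |u' x| = ∫ x in Ioc s t, G x := by
      apply setIntegral_congr_fun measurableSet_Ioc
      intro x hx
      show |u' x| = (Icc (0:ℝ) T).indicator (fun y => |u' y|) x
      rw [indicator_of_mem (mem_Icc.mpr ⟨h0s.trans hx.1.le, hx.2.trans htT⟩)]
    rw [h2] at h1
    exact h1
  obtain ⟨wsol, hsol⟩ := exists_playSol hρ hFcont hT hmod w₀ (by rwa [abs_sub_comm] at hw₀)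
  obtain ⟨hsol0, hsolmod, hsolc, hsold1, hsold2⟩ := hsol
  set c : ℝ → ℝ := fun t => max 0 (min t T) with hc
  have hcmem : ∀ t, c t ∈ Icc (0:ℝ) T := fun t =>
    ⟨le_max_left _ _, max_le hT (min_le_right t T)⟩
  have hceq : ∀ t ∈ Icc (0:ℝ) T, c t = t := by
    intro t ht
    rw [hc]; simp only [min_eq_left ht.2, max_eq_right ht.1]
  have hcmono : Monotone c := fun s t hst =>
    max_le_max (le_refl 0) (min_le_min hst (le_refl T))
  set wb : ℝ → ℝ := fun t => wsol (c t) with hwb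
  have hwbeq : ∀ t ∈ Icc (0:ℝ) T, wb t = wsol t := fun t ht => by rw [hwb]; simp [hceq t ht]
  -- F is constant below 0 and above T
  have hFlo : ∀ t ≤ (0:ℝ), F t = F 0 := by
    intro t ht
    have h2 : F 0 - F t = ∫ x in Ioc t 0, G x := hFdiff t 0 ht
    have h3 : ∫ x in Ioc t 0, G x = ∫ x in Ioo t 0, G x := by
      apply setIntegral_congr_set
      exact (Ioo_ae_eq_Ioc (μ := volume) (a := t) (b := 0)).symm
    have h4 : ∫ x in Ioo t 0, G x = 0 := by
      apply setIntegral_eq_zero_of_forall_eq_zero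
      intro x hx
      exact indicator_of_notMem (fun hmem => absurd hmem.1 (not_le.2 hx.2)) _
    linarith
  have hFhi : ∀ t, T ≤ t → F t = F T := by
    intro t ht
    have h2 : F t - F T = ∫ x in Ioc T t, G x := hFdiff T t ht
    have h4 : ∫ x in Ioc T t, G x = 0 := by
      apply setIntegral_eq_zero_of_forall_eq_zero
      intro x hx
      exact indicator_of_notMem (fun hmem => absurd hmem.2 (not_le.2 hx.1)) _
    linarith
  have hFclamp : ∀ t, F (c t) = F t := by
    intro t
    rcases le_or_gt t 0 with h | h
    · have hct : c t = 0 := max_eq_left ((min_le_left t T).trans h)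
      rw [hct, hFlo t h]
    rcases le_or_gt t T with h2 | h2
    · rw [hceq t ⟨h.le, h2⟩]
    · have hct : c t = T := by rw [hc]; simp only [min_eq_right h2.le, max_eq_right hT]
      rw [hct, hFhi t h2.le]
  -- global modulus for wb
  have hmodwb : ∀ s t : ℝ, s ≤ t → |wb t - wb s| ≤ F t - F s := by
    intro s t hst
    have h1 := hsolmod (c s) (c t) (hcmem s).1 (hcmono hst) (hcmem t).2
    rw [hFclamp s, hFclamp t] at h1
    exact h1
  have hwbcont : Continuous wb := cont_of_modulus_global hFcont hmodwb
  -- Stieltjes functions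
  set Gp : StieltjesFunction ℝ :=
    { toFun := fun t => F t + wb t
      mono' := fun s t hst => by
        have := abs_le.1 (hmodwb s t hst)
        show F s + wb s ≤ F t + wb t
        linarith
      right_continuous' := fun x => ((hFcont.add hwbcont).continuousAt).continuousWithinAt }
    with hGp
  set Gm : StieltjesFunction ℝ :=
    { toFun := fun t => F t - wb t
      mono' := fun s t hst => by
        have := abs_le.1 (hmodwb s t hst)
        show F s - wb s ≤ F t - wb t
        linarith
      right_continuous' := fun x => ((hFcont.sub hwbcont).continuousAt).continuousWithinAt }
    with hGm
  have hclo : ∀ t : ℝ, t ≤ 0 → c t = 0 := fun t ht => max_eq_left ((min_le_left t T).trans ht)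
  have hchi : ∀ t : ℝ, T ≤ t → c t = T := fun t ht => by
    rw [hc]; simp only [min_eq_right ht, max_eq_right hT]
  have hc0 : c 0 = 0 := hclo 0 (le_refl 0)
  have hwb0 : wb 0 = w₀ := by rw [hwb]; simp only [hc0, hsol0]
  have hGpat : ∀ t:ℝ, Gp t = F t + wb t := fun t => rfl
  have hGmat : ∀ t:ℝ, Gm t = F t - wb t := fun t => rfl
  have hbotp : Tendsto (⇑Gp) atBot (𝓝 (Gp 0)) := by
    refine Tendsto.congr' ?_ tendsto_const_nhds
    filter_upwards [eventually_le_atBot (0:ℝ)] with t ht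
    show F 0 + wb 0 = F t + wb t
    rw [hFlo t ht]
    have : wb t = wb 0 := by rw [hwb]; simp only [hclo t ht, hc0]
    rw [this]
  have htopp : Tendsto (⇑Gp) atTop (𝓝 (Gp T)) := by
    refine Tendsto.congr' ?_ tendsto_const_nhds
    filter_upwards [eventually_ge_atTop T] with t ht
    show F T + wb T = F t + wb t
    rw [hFhi t ht]
    have : wb t = wb T := by
      rw [hwb]; simp only [hchi t ht, hceq T ⟨hT, le_refl T⟩]
    rw [this]
  have hbotm : Tendsto (⇑Gm) atBot (𝓝 (Gm 0)) := by
    refine Tendsto.congr' ?_ tendsto_const_nhds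
    filter_upwards [eventually_le_atBot (0:ℝ)] with t ht
    show F 0 - wb 0 = F t - wb t
    rw [hFlo t ht]
    have : wb t = wb 0 := by rw [hwb]; simp only [hclo t ht, hc0]
    rw [this]
  have htopm : Tendsto (⇑Gm) atTop (𝓝 (Gm T)) := by
    refine Tendsto.congr' ?_ tendsto_const_nhds
    filter_upwards [eventually_ge_atTop T] with t ht
    show F T - wb T = F t - wb t
    rw [hFhi t ht]
    have : wb t = wb T := by
      rw [hwb]; simp only [hchi t ht, hceq T ⟨hT, le_refl T⟩]
    rw [this]
  haveI hfinp : IsFiniteMeasure Gp.measure := Gp.isFiniteMeasure hbotp htopp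
  haveI hfinm : IsFiniteMeasure Gm.measure := Gm.isFiniteMeasure hbotm htopm
  set ν : Measure ℝ := volume.withDensity (fun x => ENNReal.ofReal (2 * G x)) with hν
  have hsum : Gp.measure + Gm.measure = ν := by
    refine Measure.ext_of_Ioc _ _ (fun a b hab => ?_)
    rw [Measure.add_apply, StieltjesFunction.measure_Ioc, StieltjesFunction.measure_Ioc]
    have h2 : ν (Ioc a b) = ∫⁻ x in Ioc a b, ENNReal.ofReal (2 * G x) ∂volume := by
      rw [hν, withDensity_apply _ measurableSet_Ioc]
    rw [h2, ← ofReal_integral_eq_lintegral_ofReal ((hGint.const_mul 2).integrableOn)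
      (Eventually.of_forall fun x => by
        have := hGnn x; positivity)]
    rw [← ENNReal.ofReal_add (sub_nonneg.2 (Gp.mono hab.le)) (sub_nonneg.2 (Gm.mono hab.le))]
    congr 1
    have hdi : ∫ x in Ioc a b, 2 * G x = 2 * ∫ x in Ioc a b, G x :=
      integral_const_mul 2 G
    show (Gp b - Gp a) + (Gm b - Gm a) = _
    rw [hdi, ← hFdiff a b hab.le]
    show (F b + wb b - (F a + wb a)) + (F b - wb b - (F a - wb a)) = _
    ring
  have hacp : Gp.measure ≪ volume := by
    have h1 : Gp.measure ≤ ν := hsum ▸ (Measure.le_add_right (le_refl Gp.measure))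
    exact (Measure.absolutelyContinuous_of_le h1).trans (withDensity_absolutelyContinuous _ _)
  have hacm : Gm.measure ≪ volume := by
    have h1 : Gm.measure ≤ ν := hsum ▸ (Measure.le_add_left (le_refl Gm.measure))
    exact (Measure.absolutelyContinuous_of_le h1).trans (withDensity_absolutelyContinuous _ _)
  set hp : ℝ → ENNReal := Gp.measure.rnDeriv volume with hhp
  set hm : ℝ → ENNReal := Gm.measure.rnDeriv volume with hhm
  have hpint : Integrable (fun t => (hp t).toReal) volume :=
    integrable_toReal_of_lintegral_ne_top (Measure.measurable_rnDeriv _ _).aemeasurable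
      (ne_of_lt (Measure.lintegral_rnDeriv_lt_top Gp.measure volume))
  have hmint : Integrable (fun t => (hm t).toReal) volume :=
    integrable_toReal_of_lintegral_ne_top (Measure.measurable_rnDeriv _ _).aemeasurable
      (ne_of_lt (Measure.lintegral_rnDeriv_lt_top Gm.measure volume))
  set w' : ℝ → ℝ := fun t => ((hp t).toReal - (hm t).toReal)/2 with hw'
  have hw'int : Integrable w' volume := (hpint.sub hmint).div_const 2
  have hsetp : ∀ s : Set ℝ, MeasurableSet s →
      ∫ x in s, (hp x).toReal ∂volume = (Gp.measure s).toReal := by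
    intro s hs
    rw [integral_toReal ((Measure.measurable_rnDeriv _ _).aemeasurable.restrict)
      (ae_restrict_of_ae (Measure.rnDeriv_lt_top _ _)),
      ← withDensity_apply _ hs, Measure.withDensity_rnDeriv_eq _ _ hacp]
  have hsetm : ∀ s : Set ℝ, MeasurableSet s →
      ∫ x in s, (hm x).toReal ∂volume = (Gm.measure s).toReal := by
    intro s hs
    rw [integral_toReal ((Measure.measurable_rnDeriv _ _).aemeasurable.restrict)
      (ae_restrict_of_ae (Measure.rnDeriv_lt_top _ _)),
      ← withDensity_apply _ hs, Measure.withDensity_rnDeriv_eq _ _ hacm]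
  have hrep : ∀ t ∈ Icc (0:ℝ) T, wb t = w₀ + ∫ x in Ioc (0:ℝ) t, w' x := by
    intro t ht
    have h1 : ∫ x in Ioc (0:ℝ) t, w' x
        = ((∫ x in Ioc (0:ℝ) t, (hp x).toReal ∂volume)
           - ∫ x in Ioc (0:ℝ) t, (hm x).toReal ∂volume)/2 := by
      rw [hw']
      rw [integral_div, integral_sub hpint.integrableOn hmint.integrableOn]
    rw [h1, hsetp _ measurableSet_Ioc, hsetm _ measurableSet_Ioc,
      StieltjesFunction.measure_Ioc, StieltjesFunction.measure_Ioc,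
      ENNReal.toReal_ofReal (sub_nonneg.2 (Gp.mono ht.1)),
      ENNReal.toReal_ofReal (sub_nonneg.2 (Gm.mono ht.1))]
    show wb t = w₀ + ((F t + wb t - (F 0 + wb 0)) - (F t - wb t - (F 0 - wb 0)))/2
    rw [hwb0]
    ring
  -- almost-everywhere derivative of wb
  have hwbder : ∀ᵐ t ∂(volume : Measure ℝ), HasDerivAt wb (w' t) t := by
    filter_upwards [Gp.ae_hasDerivAt, Gm.ae_hasDerivAt] with t hdp hdm
    have h1 : HasDerivAt (fun y => (Gp y - Gm y)/2)
        (((Gp.measure.rnDeriv volume t).toReal - (Gm.measure.rnDeriv volume t).toReal)/2) t :=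
      (hdp.sub hdm).div_const 2
    have h2 : (fun y => (Gp y - Gm y)/2) = wb := by
      funext y; show ((F y + wb y) - (F y - wb y))/2 = wb y; ring
    rw [h2] at h1
    exact h1
  have hucont : ContinuousOn u (Icc 0 T) := contOn_of_modulus hFcont hmod
  have hwsolcont : ContinuousOn wsol (Icc 0 T) := contOn_of_modulus hFcont hsolmod
  have hVI : ∀ᵐ t ∂(volume.restrict (Icc (0:ℝ) T)),
      ∀ v : ℝ, |v| ≤ ρ → 0 ≤ w' t * (u t - wb t - v) := by
    have hnull : (volume.restrict (Icc (0:ℝ) T)) ({0, T} : Set ℝ) = 0 := by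
      apply le_antisymm _ (zero_le)
      calc (volume.restrict (Icc (0:ℝ) T)) {0, T} ≤ volume {0, T} :=
            Measure.restrict_apply_le _ _
        _ = 0 := ((finite_singleton T).insert 0).measure_zero volume
    filter_upwards [ae_restrict_of_ae hwbder, ae_restrict_mem measurableSet_Icc,
      compl_mem_ae_iff.2 hnull] with t hder htmem htnot
    intro v hv
    have ht0 : (0:ℝ) < t := lt_of_le_of_ne htmem.1 (fun h => htnot (Or.inl h.symm))
    have htT : t < T := lt_of_le_of_ne htmem.2 (fun h => htnot (Or.inr h))
    have hwbt : wb t = wsol t := hwbeq t htmem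
    have hcontAt : ContinuousAt (fun y => u y - wsol y) t :=
      (hucont.sub hwsolcont).continuousAt (Icc_mem_nhds ht0 htT)
    have hxle : |u t - wsol t| ≤ ρ := hsolc t htmem.1 htmem.2
    have caseA : u t - wsol t < ρ → w' t ≤ 0 := by
      intro hxlt
      have hev : (fun y => u y - wsol y) ⁻¹' Iio ρ ∩ Ioo 0 T ∈ nhds t :=
        inter_mem (hcontAt.preimage_mem_nhds (Iio_mem_nhds hxlt)) (Ioo_mem_nhds ht0 htT)
      obtain ⟨ε, hε, hball⟩ := Metric.mem_nhds_iff.1 hev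
      have hε2 : 0 < ε/2 := by linarith
      refine deriv_nonpos_of_antitoneOn hε2 hder ?_
      intro p hp q hq hpq
      have hsub : Icc p q ⊆ Metric.ball t ε := by
        intro r hr
        rw [Metric.mem_ball, Real.dist_eq, abs_lt]
        constructor
        · have := hp.1; have := hr.1; linarith
        · have := hq.2; have := hr.2; linarith
      have hmemp := hball (hsub ⟨le_refl p, hpq⟩)
      have hmemq := hball (hsub ⟨hpq, le_refl q⟩)
      have h0p : (0:ℝ) ≤ p := hmemp.2.1.le
      have hqT : q ≤ T := hmemq.2.2.le
      have hwq : wsol q ≤ wsol p := by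
        refine hsold1 p q h0p hpq hqT fun r h1 h2 => ?_
        exact (hball (hsub ⟨h1, h2⟩)).1
      have hwbp : wb p = wsol p := hwbeq p ⟨h0p, hmemp.2.2.le⟩
      have hwbq : wb q = wsol q := hwbeq q ⟨hmemq.2.1.le, hqT⟩
      rw [hwbp, hwbq]
      exact hwq
    have caseB : -ρ < u t - wsol t → 0 ≤ w' t := by
      intro hxlt
      have hev : (fun y => u y - wsol y) ⁻¹' Ioi (-ρ) ∩ Ioo 0 T ∈ nhds t :=
        inter_mem (hcontAt.preimage_mem_nhds (Ioi_mem_nhds hxlt)) (Ioo_mem_nhds ht0 htT)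
      obtain ⟨ε, hε, hball⟩ := Metric.mem_nhds_iff.1 hev
      have hε2 : 0 < ε/2 := by linarith
      refine deriv_nonneg_of_monotoneOn hε2 hder ?_
      intro p hp q hq hpq
      have hsub : Icc p q ⊆ Metric.ball t ε := by
        intro r hr
        rw [Metric.mem_ball, Real.dist_eq, abs_lt]
        constructor
        · have := hp.1; have := hr.1; linarith
        · have := hq.2; have := hr.2; linarith
      have hmemp := hball (hsub ⟨le_refl p, hpq⟩)
      have hmemq := hball (hsub ⟨hpq, le_refl q⟩)
      have h0p : (0:ℝ) ≤ p := hmemp.2.1.le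
      have hqT : q ≤ T := hmemq.2.2.le
      have hwq : wsol p ≤ wsol q := by
        refine hsold2 p q h0p hpq hqT fun r h1 h2 => ?_
        exact (hball (hsub ⟨h1, h2⟩)).1
      have hwbp : wb p = wsol p := hwbeq p ⟨h0p, hmemp.2.2.le⟩
      have hwbq : wb q = wsol q := hwbeq q ⟨hmemq.2.1.le, hqT⟩
      rw [hwbp, hwbq]
      exact hwq
    rw [hwbt]
    have hvρ1 : v ≤ ρ := le_of_abs_le hv
    have hvρ2 : -ρ ≤ v := neg_le_of_abs_le hv
    rcases lt_or_eq_of_le (le_of_abs_le hxle) with hlt | heq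
    · rcases eq_or_lt_of_le (neg_le_of_abs_le hxle) with heq2 | hlt2
      · -- u t - wsol t = -ρ
        have hw'le : w' t ≤ 0 := caseA hlt
        have hfac : u t - wsol t - v ≤ 0 := by linarith [heq2]
        nlinarith
      · -- interior: derivative is zero
        have h1 := caseA hlt
        have h2 := caseB hlt2
        have : w' t = 0 := le_antisymm h1 h2
        rw [this, zero_mul]
    · -- u t - wsol t = ρ
      have hw'ge : 0 ≤ w' t := caseB (by linarith)
      have hfac : 0 ≤ u t - wsol t - v := by linarith [heq]
      exact mul_nonneg hw'ge hfac
  exact ⟨wb, hwb0, w', hw'int.integrableOn, hrep,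
    fun t ht => by rw [hwbeq t ht]; exact hsolc t ht.1 ht.2, hVI⟩

lemma playOutput_le (ρ T : ℝ) (hρ : 0 < ρ) (u : ℝ → ℝ) (w₀ : ℝ)
    {w₁ w₂ : ℝ → ℝ} (h1 : IsPlayOutput ρ T u w₀ w₁) (h2 : IsPlayOutput ρ T u w₀ w₂) :
    ∀ t ∈ Icc (0:ℝ) T, w₁ t ≤ w₂ t := by
  obtain ⟨h10, w₁', h1int, h1rep, h1b, h1vi⟩ := h1
  obtain ⟨h20, w₂', h2int, h2rep, h2b, h2vi⟩ := h2
  -- continuity on Icc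
  have hcont : ∀ (f' : ℝ → ℝ), IntegrableOn f' (Icc 0 T) →
      ContinuousOn (fun t => ∫ x in Ioc (0:ℝ) t, f' x) (Icc (0:ℝ) T) := by
    intro f' hint
    set K : ℝ → ℝ := (Icc (0:ℝ) T).indicator f' with hK
    have hKint : Integrable K := IntegrableOn.integrable_indicator hint measurableSet_Icc
    have : ∀ t ∈ Icc (0:ℝ) T, (∫ x in Ioc (0:ℝ) t, f' x) = ∫ x in Iic t, K x := by
      intro t ht
      have e1 : ∫ x in Iic t, K x = ∫ x in Iic t ∩ Icc (0:ℝ) T, f' x := by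
        rw [hK, integral_indicator measurableSet_Icc]
        congr 1
        rw [Measure.restrict_restrict measurableSet_Icc, inter_comm]
      have e2 : Iic t ∩ Icc (0:ℝ) T = Icc (0:ℝ) t := by
        ext x; simp only [mem_inter_iff, mem_Iic, mem_Icc]
        constructor
        · rintro ⟨hx1, hx2, _⟩; exact ⟨hx2, hx1⟩
        · rintro ⟨hx1, hx2⟩; exact ⟨hx2, hx1, hx2.trans ht.2⟩
      have e3 : ∫ x in Icc (0:ℝ) t, f' x = ∫ x in Ioc (0:ℝ) t, f' x :=
        setIntegral_congr_set Ioc_ae_eq_Icc.symm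
      rw [e1, e2, e3]
    exact (cont_primitive hKint).continuousOn.congr fun t ht => this t ht
  have hw1cont : ContinuousOn w₁ (Icc 0 T) := by
    refine ContinuousOn.congr
      (((hcont w₁' h1int).add (continuousOn_const (c := w₀))) :
        ContinuousOn (fun t => (∫ x in Ioc (0:ℝ) t, w₁' x) + w₀) (Icc 0 T)) ?_
    intro t ht; rw [h1rep t ht]; simp only [Pi.add_apply]; ring
  have hw2cont : ContinuousOn w₂ (Icc 0 T) := by
    refine ContinuousOn.congr
      (((hcont w₂' h2int).add (continuousOn_const (c := w₀))) :
        ContinuousOn (fun t => (∫ x in Ioc (0:ℝ) t, w₂' x) + w₀) (Icc 0 T)) ?_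
    intro t ht; rw [h2rep t ht]; simp only [Pi.add_apply]; ring
  -- difference representation
  have hdiff : ∀ s t, 0 ≤ s → s ≤ t → t ≤ T →
      (w₁ t - w₂ t) - (w₁ s - w₂ s) = ∫ x in Ioc s t, (w₁' x - w₂' x) := by
    intro s t h0s hst htT
    have hint1 : IntegrableOn (fun x => w₁' x - w₂' x) (Icc 0 T) := h1int.sub h2int
    have key : ∀ (f : ℝ → ℝ) (f' : ℝ → ℝ), IntegrableOn f' (Icc 0 T) →
        (∀ r ∈ Icc (0:ℝ) T, f r = w₀ + ∫ x in Ioc (0:ℝ) r, f' x) →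
        f t - f s = ∫ x in Ioc s t, f' x := by
      intro f f' hint hrep
      rw [hrep t ⟨h0s.trans hst, htT⟩, hrep s ⟨h0s, hst.trans htT⟩]
      have hun : Ioc (0:ℝ) s ∪ Ioc s t = Ioc 0 t := Ioc_union_Ioc_eq_Ioc h0s hst
      have h2 := setIntegral_union (f := f') (μ := volume) (s := Ioc (0:ℝ) s) (t := Ioc s t)
        (Ioc_disjoint_Ioc_of_le (le_refl _)) measurableSet_Ioc
        (hint.mono_set (Ioc_subset_Icc_self.trans (Icc_subset_Icc (le_refl 0) (hst.trans htT))))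
        (hint.mono_set ((Ioc_subset_Icc_self.trans (Icc_subset_Icc h0s htT))))
      rw [hun] at h2
      rw [h2]; ring
    have k1 := key w₁ w₁' h1int h1rep
    have k2 := key w₂ w₂' h2int h2rep
    rw [integral_sub
      ((h1int.mono_set (Ioc_subset_Icc_self.trans (Icc_subset_Icc h0s htT))))
      ((h2int.mono_set (Ioc_subset_Icc_self.trans (Icc_subset_Icc h0s htT))))]
    rw [← k1, ← k2]; ring
  -- a.e. product inequality
  have hkey : ∀ᵐ t ∂(volume.restrict (Icc (0:ℝ) T)),
      (w₁ t - w₂ t) * (w₁' t - w₂' t) ≤ 0 := by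
    filter_upwards [h1vi, h2vi, ae_restrict_mem (measurableSet_Icc : MeasurableSet (Icc (0:ℝ) T))]
      with t hv1 hv2 htmem
    have hb1 : |u t - w₁ t| ≤ ρ := h1b t htmem
    have hb2 : |u t - w₂ t| ≤ ρ := h2b t htmem
    have k1 := hv1 (u t - w₂ t) hb2
    have k2 := hv2 (u t - w₁ t) hb1
    nlinarith [k1, k2]
  -- conclusion
  intro t₀ ht₀
  by_contra hcon
  push_neg at hcon
  set h : ℝ → ℝ := fun t => w₁ t - w₂ t with hh
  have hht₀ : 0 < h t₀ := by rw [hh]; simp only; linarith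
  have hhcont : ContinuousOn h (Icc 0 T) := hw1cont.sub hw2cont
  set S : Set ℝ := Icc 0 t₀ ∩ h ⁻¹' {0} with hS
  have hScl : IsClosed S :=
    ((hhcont.mono (Icc_subset_Icc (le_refl 0) ht₀.2)).preimage_isClosed_of_isClosed
      isClosed_Icc isClosed_singleton)
  have h0S : (0:ℝ) ∈ S := by
    refine ⟨⟨le_refl 0, ht₀.1⟩, ?_⟩
    simp only [mem_preimage, mem_singleton_iff, hh, h10, h20, sub_self]
  have hSbdd : BddAbove S := ⟨t₀, fun x hx => hx.1.2⟩
  set s₀ := sSup S with hs₀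
  have hs₀S : s₀ ∈ S := hScl.csSup_mem ⟨0, h0S⟩ hSbdd
  have hs₀0 : 0 ≤ s₀ := hs₀S.1.1
  have hs₀t₀ : s₀ ≤ t₀ := hs₀S.1.2
  have hs₀h : h s₀ = 0 := hs₀S.2
  have hs₀ne : s₀ ≠ t₀ := fun he => by rw [he] at hs₀h; exact hht₀.ne' hs₀h
  have hs₀lt : s₀ < t₀ := lt_of_le_of_ne hs₀t₀ hs₀ne
  have hpos : ∀ s, s₀ < s → s ≤ t₀ → 0 < h s := by
    intro s hs₀s hst₀
    rcases lt_trichotomy (h s) 0 with hneg | hzero | hpos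
    · exfalso
      have hivt : (0:ℝ) ∈ h '' Icc s t₀ := by
        apply intermediate_value_Icc hst₀ (hhcont.mono (Icc_subset_Icc
          (hs₀0.trans hs₀s.le) ht₀.2))
        exact ⟨hneg.le, hht₀.le⟩
      obtain ⟨r, hr, hr0⟩ := hivt
      have : r ∈ S := ⟨⟨hs₀0.trans (hs₀s.le.trans hr.1), hr.2⟩, hr0⟩
      have := le_csSup hSbdd this
      have := hs₀s.trans_le hr.1
      linarith
    · exfalso
      have : s ∈ S := ⟨⟨hs₀0.trans hs₀s.le, hst₀⟩, hzero⟩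
      have := le_csSup hSbdd this
      linarith
    · exact hpos
  have hae : ∀ᵐ t ∂(volume.restrict (Ioc s₀ t₀)), (w₁ t - w₂ t) * (w₁' t - w₂' t) ≤ 0 :=
    ae_restrict_of_ae_restrict_of_subset
      ((Ioc_subset_Icc_self).trans (Icc_subset_Icc hs₀0 ht₀.2)) hkey
  have hint : ∫ x in Ioc s₀ t₀, (w₁' x - w₂' x) ≤ 0 := by
    apply integral_nonpos_of_ae
    filter_upwards [hae, ae_restrict_mem measurableSet_Ioc] with t hprod htmem
    have hpos' := hpos t htmem.1 htmem.2
    by_contra hc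
    push_neg at hc
    have : 0 < (w₁ t - w₂ t) * (w₁' t - w₂' t) := mul_pos hpos' hc
    linarith
  have := hdiff s₀ t₀ hs₀0 hs₀t₀ ht₀.2
  have hh0 : h t₀ - h s₀ ≤ 0 := by rw [hh]; simp only; linarith [hint, this]
  rw [hs₀h] at hh0
  linarith


/-- Existence and uniqueness of the play operator output for absolutely
continuous inputs with admissible initial state. -/
theorem play_exists_unique (ρ T : ℝ) (hρ : 0 < ρ) (hT : 0 ≤ T)
    (u : ℝ → ℝ) (hu : AbsContOn T u) (w₀ : ℝ) (hw₀ : |w₀ - u 0| ≤ ρ) :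
    ∃ w : ℝ → ℝ, IsPlayOutput ρ T u w₀ w ∧
      ∀ w₂ : ℝ → ℝ, IsPlayOutput ρ T u w₀ w₂ → Set.EqOn w₂ w (Set.Icc 0 T) := by
  obtain ⟨w, hw⟩ := exists_playOutput ρ T hρ hT u hu w₀ hw₀
  exact ⟨w, hw, fun w₂ h₂ t ht =>
    le_antisymm (playOutput_le ρ T hρ u w₀ h₂ hw t ht)
      (playOutput_le ρ T hρ u w₀ hw h₂ t ht)⟩
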